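/- arXiv:1503.02893 — 2 statements merged into one kernel-verified Lean document; each statement's English description precedes it below -/
import Mathlib

section
/- There exists a universal constant C > 0 such that for every N ≥ 2 the following holds: if g ∈ ℂ^{2N-1} is a random vector whose real and imaginary parts have i.i.d. real Gaussian entries with mean 0 and variance 1, then E[‖G g‖₂] ≤ C ln N, where ‖G g‖₂ is the spectral norm of G g. -/
open MeasureTheory ProbabilityTheory Matrix

noncomputable section

/-- `K_j = min (j+1) (2N-1-j)`: equals `j+1` for `j ≤ N-1` and `2N-1-j` for `j ≥ N-1`. -/
def Kval (N j : ℕ) : ℕ := min (j + 1) (2 * N - 1 - j)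

/-- The Hankel matrix `H(x)` with `[H(x)]_{jk} = x_{j+k}`. -/
def hankelMat {N : ℕ} (x : Fin (2 * N - 1) → ℂ) : Matrix (Fin N) (Fin N) ℂ :=
  fun j k => x ⟨j.1 + k.1, by have := j.2; have := k.2; omega⟩

/-- The Toeplitz matrix `T(x)` with `[T(x)]_{ij} = x_{N-1+(i-j)}`. -/
def toeplitzMat {N : ℕ} (x : Fin (2 * N - 1) → ℂ) : Matrix (Fin N) (Fin N) ℂ :=
  fun i j => x ⟨N - 1 + i.1 - j.1, by have := i.2; have := j.2; omega⟩

/-- The linear map `G` with `(G x)_{kl} = x_{k+l} / √K_{k+l}`. -/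
def Gmap {N : ℕ} (x : Fin (2 * N - 1) → ℂ) : Matrix (Fin N) (Fin N) ℂ :=
  fun j k => x ⟨j.1 + k.1, by have := j.2; have := k.2; omega⟩ /
    (Real.sqrt (Kval N (j.1 + k.1)) : ℂ)

/-- The real version of the map `G`. -/
def GmapR {N : ℕ} (x : Fin (2 * N - 1) → ℝ) : Matrix (Fin N) (Fin N) ℝ :=
  fun j k => x ⟨j.1 + k.1, by have := j.2; have := k.2; omega⟩ /
    Real.sqrt (Kval N (j.1 + k.1))

/-- The singular values of a square matrix: square roots of eigenvalues of `Xᴴ * X`. -/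
def singvals {𝕜 : Type*} [RCLike 𝕜] {n : Type*} [Fintype n] [DecidableEq n]
    (X : Matrix n n 𝕜) : n → ℝ :=
  fun i => Real.sqrt ((Matrix.isHermitian_conjTranspose_mul_self X).eigenvalues i)

/-- The nuclear norm: the sum of the singular values. -/
def nucNorm {𝕜 : Type*} [RCLike 𝕜] {n : Type*} [Fintype n] [DecidableEq n]
    (X : Matrix n n 𝕜) : ℝ :=
  ∑ i, singvals X i

/-- The spectral norm: the largest singular value. -/
def specNorm {𝕜 : Type*} [RCLike 𝕜] {n : Type*} [Fintype n] [DecidableEq n]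
    (X : Matrix n n 𝕜) : ℝ :=
  ⨆ i, singvals X i

/-- The Frobenius norm of a complex matrix. -/
def frobNorm {m n : Type*} [Fintype m] [Fintype n] (X : Matrix m n ℂ) : ℝ :=
  Real.sqrt (∑ i, ∑ j, ‖X i j‖ ^ 2)

/-- Euclidean norm of a complex vector. -/
def cl2 {n : Type*} [Fintype n] (v : n → ℂ) : ℝ := Real.sqrt (∑ i, ‖v i‖ ^ 2)

/-- Euclidean norm of a real vector. -/
def rl2 {n : Type*} [Fintype n] (v : n → ℝ) : ℝ := Real.sqrt (∑ i, (v i) ^ 2)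

/-- The diagonal weight matrix `D` with diagonal entries `√K_j`. -/
def Dmat (N : ℕ) : Matrix (Fin (2 * N - 1)) (Fin (2 * N - 1)) ℂ :=
  Matrix.diagonal fun j => (Real.sqrt (Kval N j.1) : ℂ)

/-- `B : Ω → ℂ^{M×n}` is a complex standard Gaussian random matrix: the real and imaginary
parts of its entries are i.i.d. real Gaussian random variables with mean 0 and variance 1. -/
def IsStdComplexGaussianMatrix {Ω : Type*} [MeasurableSpace Ω] (μ : Measure Ω)
    {m n : ℕ} (B : Ω → Matrix (Fin m) (Fin n) ℂ) : Prop :=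
  ∃ f : Fin m × Fin n × Bool → Ω → ℝ,
    (∀ p, Measurable (f p)) ∧
    iIndepFun f μ ∧
    (∀ p, μ.map (f p) = gaussianReal 0 1) ∧
    ∀ ω i j, B ω i j = ⟨f (i, j, true) ω, f (i, j, false) ω⟩

/-- The descent cone of `y ↦ ‖G y‖_*` at `yhat`. -/
def descentCone {N : ℕ} (yhat : Fin (2 * N - 1) → ℂ) : Set (Fin (2 * N - 1) → ℂ) :=
  {v | ∃ (lam : ℝ) (z : Fin (2 * N - 1) → ℂ),
    0 ≤ lam ∧ nucNorm (Gmap (yhat + z)) ≤ nucNorm (Gmap yhat) ∧ v = lam • z}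

/-- Identify `ℝ^{4N-2}` (as `Fin (2N-1) ⊕ Fin (2N-1) → ℝ`) with `ℂ^{2N-1}`:
`γ = (α, β) ↦ α + iβ`. -/
def toComplexVec {N : ℕ} (γ : Fin (2 * N - 1) ⊕ Fin (2 * N - 1) → ℝ) : Fin (2 * N - 1) → ℂ :=
  fun j => ⟨γ (Sum.inl j), γ (Sum.inr j)⟩

/-- The real embedding in `ℝ^{4N-2}` of a set of vectors in `ℂ^{2N-1}`. -/
def realEmbed {N : ℕ} (T : Set (Fin (2 * N - 1) → ℂ)) :
    Set (Fin (2 * N - 1) ⊕ Fin (2 * N - 1) → ℝ) :=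
  {γ | toComplexVec γ ∈ T}

/-- The polar cone of a set in `ι → ℝ`. -/
def polarCone {ι : Type*} [Fintype ι] (T : Set (ι → ℝ)) : Set (ι → ℝ) :=
  {d | ∀ γ ∈ T, ∑ i, γ i * d i ≤ 0}

/-- The Gaussian width of a set `S ⊆ ι → ℝ`: `E[sup_{γ ∈ S} ⟨γ, ξ⟩]` for a standard
Gaussian vector `ξ`. -/
def gaussWidth {ι : Type*} [Fintype ι] (S : Set (ι → ℝ)) : ℝ :=
  ∫ ξ, sSup ((fun γ => ∑ i, γ i * ξ i) '' S)
    ∂(Measure.pi fun _ : ι => gaussianReal 0 1)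

/-- `λ_n = √2 Γ((n+1)/2) / Γ(n/2)`, the expected length of an `n`-dimensional standard
Gaussian vector. -/
def lamGamma (n : ℕ) : ℝ := Real.sqrt 2 * Real.Gamma ((n + 1) / 2) / Real.Gamma (n / 2)

/-! ### Auxiliary machinery for the proof of `stmt_13` -/

section MyAux
open Real

/-- 1-d Gaussian density identity -/
lemma my_gauss_density : gaussianReal 0 1 = (volume : Measure ℝ).withDensity
    (fun x => ((gaussianPDFReal 0 1 x).toNNReal : ENNReal)) :=
  gaussianReal_of_var_ne_zero 0 one_ne_zero

lemma my_pdf_mul_exp (a x : ℝ) :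
    gaussianPDFReal 0 1 x * Real.exp (a * x) = Real.exp (a ^ 2 / 2) * gaussianPDFReal a 1 x := by
  simp only [gaussianPDFReal, NNReal.coe_one]
  rw [mul_assoc, ← Real.exp_add, show -(x - 0) ^ 2 / (2 * 1) + a * x
      = a ^ 2 / 2 + -(x - a) ^ 2 / (2 * 1) from by ring, Real.exp_add]
  ring

lemma my_gauss_mgf_integrable (a : ℝ) :
    Integrable (fun x => Real.exp (a * x)) (gaussianReal 0 1) := by
  rw [my_gauss_density]
  rw [integrable_withDensity_iff ((measurable_gaussianPDFReal 0 1).real_toNNReal.coe_nnreal_ennreal)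
    (ae_of_all _ fun x => ENNReal.coe_lt_top)]
  have : (fun x => Real.exp (a * x) * (((gaussianPDFReal 0 1 x).toNNReal : ENNReal)).toReal)
      = fun x => Real.exp (a ^ 2 / 2) * gaussianPDFReal a 1 x := by
    ext x
    rw [ENNReal.coe_toReal, Real.coe_toNNReal _ (gaussianPDFReal_nonneg 0 1 x), mul_comm,
      my_pdf_mul_exp]
  rw [this]
  exact (integrable_gaussianPDFReal a 1).const_mul _

lemma my_gauss_mgf (a : ℝ) :
    ∫ x, Real.exp (a * x) ∂(gaussianReal 0 1) = Real.exp (a ^ 2 / 2) := by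
  rw [my_gauss_density,
    integral_withDensity_eq_integral_smul (measurable_gaussianPDFReal 0 1).real_toNNReal]
  have : (fun x => (gaussianPDFReal 0 1 x).toNNReal • Real.exp (a * x))
      = fun x => Real.exp (a ^ 2 / 2) * gaussianPDFReal a 1 x := by
    ext x
    rw [NNReal.smul_def, smul_eq_mul, Real.coe_toNNReal _ (gaussianPDFReal_nonneg 0 1 x),
      my_pdf_mul_exp]
  rw [this, integral_const_mul, integral_gaussianPDFReal_eq_one a one_ne_zero, mul_one]

variable {ι : Type*} [Fintype ι]

lemma my_pi_mgf_integrable (c : ι → ℝ) :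
    Integrable (fun ξ : ι → ℝ => Real.exp (∑ i, c i * ξ i))
      (Measure.pi fun _ => gaussianReal 0 1) := by
  letI : MeasureSpace ℝ := ⟨gaussianReal 0 1⟩
  haveI : SigmaFinite (volume : Measure ℝ) := by
    show SigmaFinite (gaussianReal 0 1); infer_instance
  have hpi : Measure.pi (fun _ : ι => gaussianReal 0 1) = (volume : Measure (ι → ℝ)) :=
    volume_pi.symm
  rw [hpi]
  have : (fun ξ : ι → ℝ => Real.exp (∑ i, c i * ξ i))
      = fun ξ : ι → ℝ => ∏ i, Real.exp (c i * ξ i) := by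
    ext ξ; rw [← Real.exp_sum]
  rw [this]
  exact Integrable.fintype_prod (f := fun i x => Real.exp (c i * x))
    (fun i => my_gauss_mgf_integrable (c i))

lemma my_pi_mgf (c : ι → ℝ) :
    ∫ ξ, Real.exp (∑ i, c i * ξ i) ∂(Measure.pi fun _ : ι => gaussianReal 0 1)
      = Real.exp (∑ i, (c i) ^ 2 / 2) := by
  letI : MeasureSpace ℝ := ⟨gaussianReal 0 1⟩
  haveI : SigmaFinite (volume : Measure ℝ) := by
    show SigmaFinite (gaussianReal 0 1); infer_instance
  have hpi : Measure.pi (fun _ : ι => gaussianReal 0 1) = (volume : Measure (ι → ℝ)) :=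
    volume_pi.symm
  rw [hpi]
  have : (fun ξ : ι → ℝ => Real.exp (∑ i, c i * ξ i))
      = fun ξ : ι → ℝ => ∏ i, Real.exp (c i * ξ i) := by
    ext ξ; rw [← Real.exp_sum]
  rw [this, ← hpi, integral_fintype_prod_eq_prod (f := fun i x => Real.exp (c i * x)), Real.exp_sum]
  exact Finset.prod_congr rfl fun i _ => my_gauss_mgf (c i)

lemma my_lin_measurable (c : ι → ℝ) : Measurable (fun ξ : ι → ℝ => ∑ i, c i * ξ i) :=
  Finset.measurable_sum _ fun i _ => by fun_prop

lemma my_abs_le_exp (t : ℝ) : |t| ≤ Real.exp t + Real.exp (-t) := by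
  have h1 := Real.add_one_le_exp t
  have h2 := Real.add_one_le_exp (-t)
  have h3 := Real.exp_pos t
  have h4 := Real.exp_pos (-t)
  rcases abs_cases t with ⟨h, _⟩ | ⟨h, _⟩ <;> linarith

lemma my_lin_integrable (c : ι → ℝ) :
    Integrable (fun ξ : ι → ℝ => ∑ i, c i * ξ i)
      (Measure.pi fun _ => gaussianReal 0 1) := by
  refine Integrable.mono' ((my_pi_mgf_integrable c).add (my_pi_mgf_integrable (fun i => -c i)))
    (my_lin_measurable c).aestronglyMeasurable (ae_of_all _ fun ξ => ?_)
  simp only [Pi.add_apply]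
  have h : ∑ i, -c i * ξ i = -∑ i, c i * ξ i := by simp [neg_mul]
  rw [h, Real.norm_eq_abs]
  exact my_abs_le_exp _

lemma my_sup_integrable {κ : Type*} [Fintype κ] [Nonempty κ] (c : κ → ι → ℝ) :
    Integrable (fun ξ : ι → ℝ => Finset.univ.sup' Finset.univ_nonempty
      (fun q => ∑ i, c q i * ξ i)) (Measure.pi fun _ : ι => gaussianReal 0 1) := by
  set μ := Measure.pi fun _ : ι => gaussianReal 0 1 with hμ
  set F : (ι → ℝ) → ℝ := fun ξ => Finset.univ.sup' Finset.univ_nonempty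
    (fun q => ∑ i, c q i * ξ i) with hF
  have hFmeas : Measurable F := by
    have h := Finset.measurable_sup' (s := (Finset.univ : Finset κ)) Finset.univ_nonempty
      (f := fun q (ξ : ι → ℝ) => ∑ i, c q i * ξ i) (fun q _ => my_lin_measurable (c q))
    have : F = Finset.univ.sup' Finset.univ_nonempty (fun q (ξ : ι → ℝ) => ∑ i, c q i * ξ i) := by
      funext ξ; rw [Finset.sup'_apply]
    rwa [this]
  have hgi : Integrable (fun ξ : ι → ℝ => ∑ q : κ, |∑ i, c q i * ξ i|) μ :=
    integrable_finset_sum _ fun q _ => (my_lin_integrable (c q)).abs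
  refine hgi.mono' hFmeas.aestronglyMeasurable (ae_of_all _ fun ξ => ?_)
  obtain ⟨q₀, _, hq₀⟩ := Finset.exists_mem_eq_sup' Finset.univ_nonempty
    (fun q => ∑ i, c q i * ξ i)
  calc ‖F ξ‖ = |∑ i, c q₀ i * ξ i| := by rw [hF]; simp only [hq₀]; rfl
  _ ≤ ∑ q, |∑ i, c q i * ξ i| := Finset.single_le_sum
      (f := fun q => |∑ i, c q i * ξ i|)
      (fun q _ => abs_nonneg _) (Finset.mem_univ q₀)

lemma my_sup_bound {κ : Type*} [Fintype κ] [Nonempty κ] (c : κ → ι → ℝ) (s : ℝ)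
    (hs : ∀ q, ∑ i, (c q i) ^ 2 ≤ s) :
    ∫ ξ, Finset.univ.sup' Finset.univ_nonempty (fun q => ∑ i, c q i * ξ i)
      ∂(Measure.pi fun _ : ι => gaussianReal 0 1)
      ≤ Real.log (Fintype.card κ) + s / 2 := by
  set μ := Measure.pi fun _ : ι => gaussianReal 0 1 with hμ
  set F : (ι → ℝ) → ℝ := fun ξ => Finset.univ.sup' Finset.univ_nonempty
    (fun q => ∑ i, c q i * ξ i) with hF
  have hFmeas : Measurable F := by
    have h := Finset.measurable_sup' (s := (Finset.univ : Finset κ)) Finset.univ_nonempty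
      (f := fun q (ξ : ι → ℝ) => ∑ i, c q i * ξ i) (fun q _ => my_lin_measurable (c q))
    have : F = Finset.univ.sup' Finset.univ_nonempty (fun q (ξ : ι → ℝ) => ∑ i, c q i * ξ i) := by
      funext ξ; rw [Finset.sup'_apply]
    rwa [this]
  have hFi : Integrable F μ := my_sup_integrable c
  have hexpF : Integrable (Real.exp ∘ F) μ := by
    have hgi : Integrable (fun ξ : ι → ℝ => ∑ q : κ, Real.exp (∑ i, c q i * ξ i)) μ :=
      integrable_finset_sum _ fun q _ => my_pi_mgf_integrable (c q)
    refine hgi.mono' (Real.measurable_exp.comp hFmeas).aestronglyMeasurable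
      (ae_of_all _ fun ξ => ?_)
    obtain ⟨q₀, _, hq₀⟩ := Finset.exists_mem_eq_sup' Finset.univ_nonempty
      (fun q => ∑ i, c q i * ξ i)
    calc ‖(Real.exp ∘ F) ξ‖ = Real.exp (∑ i, c q₀ i * ξ i) := by
          rw [Function.comp_apply, Real.norm_eq_abs, abs_of_pos (Real.exp_pos _), hF]
          simp only [hq₀]
    _ ≤ ∑ q, Real.exp (∑ i, c q i * ξ i) := Finset.single_le_sum
        (f := fun q => Real.exp (∑ i, c q i * ξ i))
        (fun q _ => (Real.exp_pos _).le) (Finset.mem_univ q₀)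
  have jensen : Real.exp (∫ ξ, F ξ ∂μ) ≤ ∫ ξ, Real.exp (F ξ) ∂μ := by
    have := ConvexOn.map_average_le convexOn_exp Real.continuous_exp.continuousOn
      isClosed_univ (ae_of_all μ fun ξ => Set.mem_univ (F ξ)) hFi hexpF
    rwa [average_eq_integral, average_eq_integral] at this
  have step2 : ∫ ξ, Real.exp (F ξ) ∂μ ≤ (Fintype.card κ : ℝ) * Real.exp (s / 2) := by
    have h1 : ∫ ξ, Real.exp (F ξ) ∂μ ≤ ∫ ξ, ∑ q, Real.exp (∑ i, c q i * ξ i) ∂μ := by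
      refine integral_mono hexpF (integrable_finset_sum _ fun q _ => my_pi_mgf_integrable (c q))
        fun ξ => ?_
      obtain ⟨q₀, _, hq₀⟩ := Finset.exists_mem_eq_sup' Finset.univ_nonempty
        (fun q => ∑ i, c q i * ξ i)
      calc Real.exp (F ξ) = Real.exp (∑ i, c q₀ i * ξ i) := by rw [hF]; simp only [hq₀]
      _ ≤ ∑ q, Real.exp (∑ i, c q i * ξ i) := Finset.single_le_sum
          (f := fun q => Real.exp (∑ i, c q i * ξ i))
          (fun q _ => (Real.exp_pos _).le) (Finset.mem_univ q₀)
    have h2 : ∫ ξ, ∑ q, Real.exp (∑ i, c q i * ξ i) ∂μ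
        = ∑ q, Real.exp (∑ i, (c q i) ^ 2 / 2) := by
      rw [integral_finset_sum _ fun q _ => my_pi_mgf_integrable (c q)]
      exact Finset.sum_congr rfl fun q _ => my_pi_mgf (c q)
    have hb : ∀ q : κ, Real.exp (∑ i, (c q i) ^ 2 / 2) ≤ Real.exp (s / 2) := by
      intro q
      apply Real.exp_le_exp.mpr
      rw [← Finset.sum_div]
      linarith [hs q]
    have h3 : ∑ q : κ, Real.exp (∑ i, (c q i) ^ 2 / 2)
        ≤ (Fintype.card κ : ℝ) * Real.exp (s / 2) := by
      calc ∑ q : κ, Real.exp (∑ i, (c q i) ^ 2 / 2) ≤ ∑ q : κ, Real.exp (s / 2) :=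
            Finset.sum_le_sum fun q _ => hb q
        _ = (Fintype.card κ : ℝ) * Real.exp (s / 2) := by
            rw [Finset.sum_const, Finset.card_univ, nsmul_eq_mul]
    rw [h2] at h1
    linarith
  have hcard : (0 : ℝ) < Fintype.card κ := by
    exact_mod_cast Fintype.card_pos
  have : Real.exp (∫ ξ, F ξ ∂μ) ≤ Real.exp (Real.log (Fintype.card κ) + s / 2) := by
    rw [Real.exp_add, Real.exp_log hcard]
    exact jensen.trans step2
  exact Real.exp_le_exp.mp this

end MyAux


section MyDet
open Real

/-- complex exponential on the unit circle -/
def myec (θ : ℝ) : ℂ := Complex.exp (θ * Complex.I)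

lemma myec_add (a b : ℝ) : myec (a + b) = myec a * myec b := by
  rw [myec, myec, myec, ← Complex.exp_add]
  congr 1
  push_cast
  ring

lemma myec_conj (θ : ℝ) : (starRingEnd ℂ) (myec θ) = myec (-θ) := by
  rw [myec, myec, ← Complex.exp_conj]
  congr 1
  simp [Complex.conj_I]

lemma myec_pow (θ : ℝ) (m : ℕ) : myec θ ^ m = myec (m * θ) := by
  rw [myec, myec, ← Complex.exp_nat_mul]
  congr 1
  push_cast
  ring

lemma myec_abs (θ : ℝ) : ‖myec θ‖ = 1 := Complex.norm_exp_ofReal_mul_I θ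

lemma myec_normSq (θ : ℝ) : Complex.normSq (myec θ) = 1 := by
  rw [← Complex.sq_norm, myec_abs, one_pow]

lemma myec_zero : myec 0 = 1 := by simp [myec]

/-- discrete orthogonality of characters -/
lemma my_orth (M : ℕ) (hM : 0 < M) (j l : ℕ) (hj : j < M) (hl : l < M) :
    ∑ m : Fin M, myec (2 * π * j * m / M) * myec (-(2 * π * l * m / M))
      = if j = l then (M : ℂ) else 0 := by
  have hMR : (M : ℝ) ≠ 0 := Nat.cast_ne_zero.mpr hM.ne'
  have hMC : (M : ℂ) ≠ 0 := Nat.cast_ne_zero.mpr hM.ne'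
  have key : ∀ m : Fin M, myec (2 * π * j * m / M) * myec (-(2 * π * l * m / M))
      = myec (2 * π * ((j : ℝ) - l) / M) ^ (m : ℕ) := by
    intro m
    rw [← myec_add, myec_pow]
    congr 1
    field_simp
    ring
  rw [Finset.sum_congr rfl fun m _ => key m]
  rw [Fin.sum_univ_eq_sum_range (fun m => myec (2 * π * ((j : ℝ) - l) / M) ^ m) M]
  by_cases h : j = l
  · subst h
    simp [myec_zero]
  · rw [if_neg h]
    set z := myec (2 * π * ((j : ℝ) - l) / M) with hz
    have hzM : z ^ M = 1 := by
      rw [hz, myec_pow, myec]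
      have harg : (((M : ℝ) * (2 * π * ((j : ℝ) - l) / M) : ℝ) : ℂ) * Complex.I
          = ((j : ℤ) - l) * (2 * π * Complex.I) := by
        push_cast
        field_simp
      rw [harg]
      convert Complex.exp_int_mul_two_pi_mul_I ((j : ℤ) - l) using 2
      push_cast
      ring
    have hz1 : z ≠ 1 := by
      intro hcon
      rw [hz, myec, Complex.exp_eq_one_iff] at hcon
      obtain ⟨n, hn⟩ := hcon
      have him := congrArg Complex.im hn
      simp [Complex.mul_im, Complex.I_im, Complex.I_re] at him
      -- him : 2 * π * ((j:ℝ) - l) / M = n * (2 * π)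
      have hpi := Real.pi_ne_zero
      field_simp at him
      -- him : 2 * π * ((j:ℝ) - l) = n * (2 * π) * M  (up to arrangement)
      have h2pi : (2 * π : ℝ) ≠ 0 := by positivity
      have hjl : ((j : ℝ) - l) = n * M := by
        apply mul_left_cancel₀ h2pi
        linear_combination (2 * π) * him
      have hjlz : ((j : ℤ) - l) = n * M := by exact_mod_cast hjl
      rcases lt_trichotomy n 0 with hn0 | hn0 | hn0
      · have h1 : (n : ℤ) * M ≤ -M := by
          have : (n : ℤ) ≤ -1 := by omega
          nlinarith [Int.natCast_pos.mpr hM]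
        omega
      · subst hn0; simp at hjlz; omega
      · have h1 : (M : ℤ) ≤ n * M := by
          have : (1 : ℤ) ≤ n := hn0
          nlinarith [Int.natCast_pos.mpr hM]
        omega
    rw [geom_sum_eq hz1, hzM]
    simp

/-- Fourier inversion for vectors indexed by `Fin M`. -/
lemma my_inv (M : ℕ) (hM : 0 < M) (y : Fin M → ℂ) (j : Fin M) :
    y j = (1 / (M : ℂ)) * ∑ m : Fin M,
      (∑ j' : Fin M, y j' * myec (2 * π * j' * m / M)) * myec (-(2 * π * j * m / M)) := by
  have hMC : (M : ℂ) ≠ 0 := Nat.cast_ne_zero.mpr hM.ne'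
  have step : ∑ m : Fin M, (∑ j' : Fin M, y j' * myec (2 * π * j' * m / M))
      * myec (-(2 * π * j * m / M)) = (M : ℂ) * y j := by
    calc ∑ m : Fin M, (∑ j' : Fin M, y j' * myec (2 * π * j' * m / M))
          * myec (-(2 * π * j * m / M))
        = ∑ m : Fin M, ∑ j' : Fin M,
            y j' * (myec (2 * π * j' * m / M) * myec (-(2 * π * j * m / M))) := by
          refine Finset.sum_congr rfl fun m _ => ?_
          rw [Finset.sum_mul]
          exact Finset.sum_congr rfl fun j' _ => by ring
      _ = ∑ j' : Fin M, ∑ m : Fin M,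
            y j' * (myec (2 * π * j' * m / M) * myec (-(2 * π * j * m / M))) :=
          Finset.sum_comm
      _ = ∑ j' : Fin M, y j' * (if (j' : ℕ) = (j : ℕ) then (M : ℂ) else 0) := by
          refine Finset.sum_congr rfl fun j' _ => ?_
          rw [← Finset.mul_sum, my_orth M hM j' j j'.2 j.2]
      _ = (M : ℂ) * y j := by
          rw [Finset.sum_eq_single j]
          · simp [mul_comm]
          · intro j' _ hne
            rw [if_neg (fun hval => hne (Fin.ext hval)), mul_zero]
          · intro habs
            exact absurd (Finset.mem_univ j) habs
  rw [step, one_div, ← mul_assoc, inv_mul_cancel₀ hMC, one_mul]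



/-- Parseval for zero-padded DFT. -/
lemma my_parseval (M N : ℕ) (hM : 0 < M) (hNM : N ≤ M) (f : Fin N → ℂ) :
    ∑ m : Fin M, Complex.normSq (∑ k : Fin N, f k * myec (-(2 * π * k.1 * m.1 / M)))
      = M * ∑ k, Complex.normSq (f k) := by
  set A : Fin M → ℂ := fun m => ∑ k : Fin N, f k * myec (-(2 * π * k.1 * m.1 / M)) with hA
  have key : ∑ m : Fin M, A m * (starRingEnd ℂ) (A m)
      = (M : ℂ) * ∑ k, f k * (starRingEnd ℂ) (f k) := by
    calc ∑ m : Fin M, A m * (starRingEnd ℂ) (A m)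
        = ∑ m : Fin M, ∑ k : Fin N, ∑ k' : Fin N, (f k * (starRingEnd ℂ) (f k')) *
            (myec (2 * π * k'.1 * m.1 / M) * myec (-(2 * π * k.1 * m.1 / M))) := by
          refine Finset.sum_congr rfl fun m _ => ?_
          rw [hA]
          rw [map_sum, Finset.sum_mul_sum]
          refine Finset.sum_congr rfl fun k _ => Finset.sum_congr rfl fun k' _ => ?_
          rw [_root_.map_mul, myec_conj, neg_neg]
          ring
      _ = ∑ k : Fin N, ∑ k' : Fin N, (f k * (starRingEnd ℂ) (f k')) *
            ∑ m : Fin M, (myec (2 * π * k'.1 * m.1 / M) * myec (-(2 * π * k.1 * m.1 / M))) := by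
          rw [Finset.sum_comm]
          refine Finset.sum_congr rfl fun k _ => ?_
          rw [Finset.sum_comm]
          exact Finset.sum_congr rfl fun k' _ => (Finset.mul_sum _ _ _).symm
      _ = ∑ k : Fin N, (f k * (starRingEnd ℂ) (f k)) * (M : ℂ) := by
          refine Finset.sum_congr rfl fun k _ => ?_
          rw [Finset.sum_eq_single k]
          · rw [my_orth M hM k.1 k.1 (lt_of_lt_of_le k.2 hNM) (lt_of_lt_of_le k.2 hNM),
              if_pos rfl]
          · intro k' _ hne
            rw [my_orth M hM k'.1 k.1 (lt_of_lt_of_le k'.2 hNM) (lt_of_lt_of_le k.2 hNM),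
              if_neg (fun hval => hne (Fin.ext hval)), mul_zero]
          · intro habs; exact absurd (Finset.mem_univ k) habs
      _ = (M : ℂ) * ∑ k, f k * (starRingEnd ℂ) (f k) := by
          rw [← Finset.sum_mul, mul_comm]
  have h2 : ((∑ m : Fin M, Complex.normSq (A m) : ℝ) : ℂ)
      = ((M * ∑ k, Complex.normSq (f k) : ℝ) : ℂ) := by
    push_cast
    simp only [← Complex.mul_conj]
    exact key
  exact_mod_cast h2

def myQ (N : ℕ) (x : Fin (2 * N - 1) → ℂ) (m : Fin (2 * N - 1)) : ℂ :=
  ∑ j : Fin (2 * N - 1), (x j / (Real.sqrt (Kval N j.1) : ℂ))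
    * myec (2 * π * j.1 * m.1 / ((2 * N - 1 : ℕ) : ℝ))

lemma my_bilinear {N : ℕ} (hN : 2 ≤ N) (x : Fin (2 * N - 1) → ℂ) (P : ℝ) (hP : 0 ≤ P)
    (hq : ∀ m, ‖myQ N x m‖ ≤ P) (u v : Fin N → ℂ) :
    ‖∑ k, ∑ l, (starRingEnd ℂ) (u k) * (Gmap x k l * v l)‖
      ≤ P * Real.sqrt (∑ k, Complex.normSq (u k)) * Real.sqrt (∑ l, Complex.normSq (v l)) := by
  have hM : 0 < 2 * N - 1 := by omega
  have hNM : N ≤ 2 * N - 1 := by omega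
  have hMR : (0:ℝ) < ((2 * N - 1 : ℕ) : ℝ) := by exact_mod_cast hM
  set a : Fin (2 * N - 1) → ℂ := fun m => ∑ k : Fin N, (starRingEnd ℂ) (u k)
    * myec (-(2 * π * k.1 * m.1 / ((2 * N - 1 : ℕ) : ℝ))) with ha
  set b : Fin (2 * N - 1) → ℂ := fun m => ∑ l : Fin N, v l
    * myec (-(2 * π * l.1 * m.1 / ((2 * N - 1 : ℕ) : ℝ))) with hb
  have haapp : ∀ m, a m = ∑ k : Fin N, (starRingEnd ℂ) (u k)
      * myec (-(2 * π * k.1 * m.1 / ((2 * N - 1 : ℕ) : ℝ))) := fun m => rfl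
  have hbapp : ∀ m, b m = ∑ l : Fin N, v l
      * myec (-(2 * π * l.1 * m.1 / ((2 * N - 1 : ℕ) : ℝ))) := fun m => rfl
  have key1 : ∀ k l : Fin N, Gmap x k l = (1 / ((2 * N - 1 : ℕ) : ℂ)) * ∑ m : Fin (2 * N - 1),
      myQ N x m * (myec (-(2 * π * k.1 * m.1 / ((2 * N - 1 : ℕ) : ℝ)))
        * myec (-(2 * π * l.1 * m.1 / ((2 * N - 1 : ℕ) : ℝ)))) := by
    intro k l
    have hinv := my_inv (2 * N - 1) hM (fun j => x j / (Real.sqrt (Kval N j.1) : ℂ))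
      ⟨k.1 + l.1, by have := k.2; have := l.2; omega⟩
    have hinv' : Gmap x k l = (1 / ((2 * N - 1 : ℕ) : ℂ)) * ∑ m : Fin (2 * N - 1),
        (∑ j' : Fin (2 * N - 1), (x j' / (Real.sqrt (Kval N j'.1) : ℂ))
          * myec (2 * π * j'.1 * m.1 / ((2 * N - 1 : ℕ) : ℝ)))
        * myec (-(2 * π * ((k.1 + l.1 : ℕ) : ℝ) * m.1 / ((2 * N - 1 : ℕ) : ℝ))) := hinv
    rw [hinv']
    congr 1
    refine Finset.sum_congr rfl fun m _ => ?_
    congr 1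
    rw [← myec_add]
    congr 1
    push_cast
    ring
  have expand : ∑ k, ∑ l, (starRingEnd ℂ) (u k) * (Gmap x k l * v l)
      = ∑ m : Fin (2 * N - 1), (1 / ((2 * N - 1 : ℕ) : ℂ)) * myQ N x m * (a m * b m) := by
    have e1 : ∀ k l : Fin N, (starRingEnd ℂ) (u k) * (Gmap x k l * v l)
        = ∑ m : Fin (2 * N - 1), (1 / ((2 * N - 1 : ℕ) : ℂ)) * myQ N x m *
          (((starRingEnd ℂ) (u k) * myec (-(2 * π * k.1 * m.1 / ((2 * N - 1 : ℕ) : ℝ))))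
            * (v l * myec (-(2 * π * l.1 * m.1 / ((2 * N - 1 : ℕ) : ℝ))))) := by
      intro k l
      rw [key1 k l]
      simp only [Finset.mul_sum, Finset.sum_mul]
      exact Finset.sum_congr rfl fun m _ => by ring
    calc ∑ k, ∑ l, (starRingEnd ℂ) (u k) * (Gmap x k l * v l)
        = ∑ k : Fin N, ∑ l : Fin N, ∑ m : Fin (2 * N - 1),
            (1 / ((2 * N - 1 : ℕ) : ℂ)) * myQ N x m *
          (((starRingEnd ℂ) (u k) * myec (-(2 * π * k.1 * m.1 / ((2 * N - 1 : ℕ) : ℝ))))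
            * (v l * myec (-(2 * π * l.1 * m.1 / ((2 * N - 1 : ℕ) : ℝ))))) :=
          Finset.sum_congr rfl fun k _ => Finset.sum_congr rfl fun l _ => e1 k l
      _ = ∑ k : Fin N, ∑ m : Fin (2 * N - 1), ∑ l : Fin N,
            (1 / ((2 * N - 1 : ℕ) : ℂ)) * myQ N x m *
          (((starRingEnd ℂ) (u k) * myec (-(2 * π * k.1 * m.1 / ((2 * N - 1 : ℕ) : ℝ))))
            * (v l * myec (-(2 * π * l.1 * m.1 / ((2 * N - 1 : ℕ) : ℝ))))) :=
          Finset.sum_congr rfl fun k _ => Finset.sum_comm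
      _ = ∑ m : Fin (2 * N - 1), ∑ k : Fin N, ∑ l : Fin N,
            (1 / ((2 * N - 1 : ℕ) : ℂ)) * myQ N x m *
          (((starRingEnd ℂ) (u k) * myec (-(2 * π * k.1 * m.1 / ((2 * N - 1 : ℕ) : ℝ))))
            * (v l * myec (-(2 * π * l.1 * m.1 / ((2 * N - 1 : ℕ) : ℝ))))) := Finset.sum_comm
      _ = ∑ m : Fin (2 * N - 1), (1 / ((2 * N - 1 : ℕ) : ℂ)) * myQ N x m * (a m * b m) := by
          refine Finset.sum_congr rfl fun m _ => ?_
          rw [haapp m, hbapp m, Finset.sum_mul_sum]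
          simp only [Finset.mul_sum]
  rw [expand]
  have step1 : ‖∑ m : Fin (2 * N - 1),
        (1 / ((2 * N - 1 : ℕ) : ℂ)) * myQ N x m * (a m * b m)‖
      ≤ ∑ m : Fin (2 * N - 1), (1 / ((2 * N - 1 : ℕ) : ℝ)) * P
          * (‖a m‖ * ‖b m‖) := by
    refine (norm_sum_le _ _).trans (Finset.sum_le_sum fun m _ => ?_)
    rw [norm_mul, norm_mul, norm_mul]
    have h1 : ‖1 / ((2 * N - 1 : ℕ) : ℂ)‖ = 1 / ((2 * N - 1 : ℕ) : ℝ) := by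
      rw [norm_div, Complex.norm_natCast]; simp
    rw [h1]
    have h5 : (0:ℝ) ≤ ‖a m‖ * ‖b m‖ :=
      mul_nonneg (norm_nonneg _) (norm_nonneg _)
    have h6 : (0:ℝ) ≤ 1 / ((2 * N - 1 : ℕ) : ℝ) := by positivity
    exact mul_le_mul_of_nonneg_right (mul_le_mul_of_nonneg_left (hq m) h6) h5
  have cs : ∑ m : Fin (2 * N - 1), ‖a m‖ * ‖b m‖
      ≤ Real.sqrt (∑ m : Fin (2 * N - 1), Complex.normSq (a m))
        * Real.sqrt (∑ m : Fin (2 * N - 1), Complex.normSq (b m)) := by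
    have h1 := Finset.sum_mul_sq_le_sq_mul_sq Finset.univ
      (fun m : Fin (2 * N - 1) => ‖a m‖)
      (fun m : Fin (2 * N - 1) => ‖b m‖)
    have h0 : (0:ℝ) ≤ ∑ m : Fin (2 * N - 1), ‖a m‖ * ‖b m‖ :=
      Finset.sum_nonneg fun m _ => mul_nonneg (norm_nonneg _) (norm_nonneg _)
    calc ∑ m : Fin (2 * N - 1), ‖a m‖ * ‖b m‖
        = Real.sqrt ((∑ m : Fin (2 * N - 1), ‖a m‖ * ‖b m‖) ^ 2) :=
          (Real.sqrt_sq h0).symm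
      _ ≤ Real.sqrt ((∑ m : Fin (2 * N - 1), ‖a m‖ ^ 2)
            * ∑ m : Fin (2 * N - 1), ‖b m‖ ^ 2) := Real.sqrt_le_sqrt h1
      _ = Real.sqrt (∑ m : Fin (2 * N - 1), Complex.normSq (a m))
            * Real.sqrt (∑ m : Fin (2 * N - 1), Complex.normSq (b m)) := by
          rw [Real.sqrt_mul (Finset.sum_nonneg fun m _ => sq_nonneg _)]
          simp only [Complex.sq_norm]
  have hpa : ∑ m : Fin (2 * N - 1), Complex.normSq (a m)
      = (2 * N - 1 : ℕ) * ∑ k, Complex.normSq (u k) := by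
    have := my_parseval (2 * N - 1) N hM hNM (fun k => (starRingEnd ℂ) (u k))
    simp only [Complex.normSq_conj] at this
    exact this
  have hpb : ∑ m : Fin (2 * N - 1), Complex.normSq (b m)
      = (2 * N - 1 : ℕ) * ∑ l, Complex.normSq (v l) :=
    my_parseval (2 * N - 1) N hM hNM v
  have hfin : ∑ m : Fin (2 * N - 1), (1 / ((2 * N - 1 : ℕ) : ℝ)) * P
        * (‖a m‖ * ‖b m‖)
      ≤ P * Real.sqrt (∑ k, Complex.normSq (u k)) * Real.sqrt (∑ l, Complex.normSq (v l)) := by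
    rw [← Finset.mul_sum]
    have h3 : Real.sqrt (∑ m : Fin (2 * N - 1), Complex.normSq (a m))
        * Real.sqrt (∑ m : Fin (2 * N - 1), Complex.normSq (b m))
        = ((2 * N - 1 : ℕ) : ℝ) * (Real.sqrt (∑ k, Complex.normSq (u k))
          * Real.sqrt (∑ l, Complex.normSq (v l))) := by
      rw [hpa, hpb, Real.sqrt_mul hMR.le, Real.sqrt_mul hMR.le]
      have hss : Real.sqrt ((2 * N - 1 : ℕ) : ℝ) * Real.sqrt ((2 * N - 1 : ℕ) : ℝ)
          = ((2 * N - 1 : ℕ) : ℝ) := Real.mul_self_sqrt hMR.le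
      linear_combination (Real.sqrt (∑ k, Complex.normSq (u k))
        * Real.sqrt (∑ l, Complex.normSq (v l))) * hss
    calc (1 / ((2 * N - 1 : ℕ) : ℝ)) * P
          * ∑ m : Fin (2 * N - 1), ‖a m‖ * ‖b m‖
        ≤ (1 / ((2 * N - 1 : ℕ) : ℝ)) * P
          * (Real.sqrt (∑ m : Fin (2 * N - 1), Complex.normSq (a m))
            * Real.sqrt (∑ m : Fin (2 * N - 1), Complex.normSq (b m))) := by
          have h4 : (0:ℝ) ≤ (1 / ((2 * N - 1 : ℕ) : ℝ)) * P := by positivity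
          exact mul_le_mul_of_nonneg_left cs h4
      _ = P * Real.sqrt (∑ k, Complex.normSq (u k))
          * Real.sqrt (∑ l, Complex.normSq (v l)) := by
          rw [h3]
          have h7 : (1 / ((2 * N - 1 : ℕ) : ℝ)) * ((2 * N - 1 : ℕ) : ℝ) = 1 :=
            one_div_mul_cancel hMR.ne'
          linear_combination (P * Real.sqrt (∑ k, Complex.normSq (u k))
            * Real.sqrt (∑ l, Complex.normSq (v l))) * h7
  exact step1.trans hfin



lemma my_spec_bound {N : ℕ} (hN : 2 ≤ N) (x : Fin (2 * N - 1) → ℂ) (P : ℝ) (hP : 0 ≤ P)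
    (hq : ∀ m, ‖myQ N x m‖ ≤ P) : specNorm (Gmap x) ≤ P := by
  haveI : Nonempty (Fin N) := ⟨⟨0, by omega⟩⟩
  rw [specNorm]
  refine ciSup_le fun i => ?_
  set X := Gmap x with hX
  have hH := Matrix.isHermitian_conjTranspose_mul_self X
  set u : Fin N → ℂ := ⇑((Matrix.isHermitian_conjTranspose_mul_self X).eigenvectorBasis i) with hu
  set w : Fin N → ℂ := X *ᵥ u with hw
  set t : ℝ := ∑ k, Complex.normSq (w k) with ht
  have ht0 : 0 ≤ t := Finset.sum_nonneg fun k _ => Complex.normSq_nonneg _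
  -- norm of u is 1
  have hnorm : ∑ k, Complex.normSq (u k) = 1 := by
    have h1 : ‖(Matrix.isHermitian_conjTranspose_mul_self X).eigenvectorBasis i‖ = 1 :=
      (Matrix.isHermitian_conjTranspose_mul_self X).eigenvectorBasis.orthonormal.1 i
    have h2 : ‖(Matrix.isHermitian_conjTranspose_mul_self X).eigenvectorBasis i‖
        = Real.sqrt (∑ k, ‖u k‖ ^ 2) := by
      rw [EuclideanSpace.norm_eq]
    rw [h2] at h1
    have h3 : ∑ k, ‖u k‖ ^ 2 = ∑ k, Complex.normSq (u k) := by
      refine Finset.sum_congr rfl fun k _ => ?_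
      rw [Complex.sq_norm]
    rw [h3] at h1
    nlinarith [Real.sq_sqrt (Finset.sum_nonneg
      fun k (_ : k ∈ Finset.univ) => Complex.normSq_nonneg (u k)), h1]
  -- dot product identities
  have hdot1 : dotProduct (star u) ((Xᴴ * X) *ᵥ u) = (t : ℂ) := by
    rw [← Matrix.mulVec_mulVec, dotProduct_mulVec, ← Matrix.star_mulVec, ← hw]
    rw [dotProduct]
    have e : ∀ k, (star w) k * w k = ((Complex.normSq (w k) : ℝ) : ℂ) := fun k => by
      simp only [Pi.star_apply, RCLike.star_def]
      rw [mul_comm, Complex.mul_conj]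
    rw [Finset.sum_congr rfl fun k _ => e k, ← Complex.ofReal_sum]
  have hdot2 : dotProduct (star u) ((Xᴴ * X) *ᵥ u)
      = (((Matrix.isHermitian_conjTranspose_mul_self X).eigenvalues i : ℝ) : ℂ) := by
    rw [(Matrix.isHermitian_conjTranspose_mul_self X).mulVec_eigenvectorBasis i]
    have h4 : dotProduct (star u) u = 1 := by
      rw [dotProduct]
      have e : ∀ k, (star u) k * u k = ((Complex.normSq (u k) : ℝ) : ℂ) := fun k => by
        simp only [Pi.star_apply, RCLike.star_def]
        rw [mul_comm, Complex.mul_conj]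
      rw [Finset.sum_congr rfl fun k _ => e k, ← Complex.ofReal_sum, hnorm, Complex.ofReal_one]
    calc dotProduct (star u)
          (((Matrix.isHermitian_conjTranspose_mul_self X).eigenvalues i : ℝ) • u)
        = (((Matrix.isHermitian_conjTranspose_mul_self X).eigenvalues i : ℝ) : ℂ)
            * dotProduct (star u) u := by
          simp only [dotProduct, Pi.smul_apply, Complex.real_smul, Finset.mul_sum]
          exact Finset.sum_congr rfl fun k _ => by ring
      _ = (((Matrix.isHermitian_conjTranspose_mul_self X).eigenvalues i : ℝ) : ℂ) := by
          rw [h4, mul_one]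
  have heig : ((Matrix.isHermitian_conjTranspose_mul_self X).eigenvalues i : ℝ) = t := by
    have := hdot1.symm.trans hdot2
    exact_mod_cast this.symm
  -- the bilinear bound applied to w and u
  have hbl := my_bilinear hN x P hP hq w u
  have hsum : ∑ k, ∑ l, (starRingEnd ℂ) (w k) * (Gmap x k l * u l) = (t : ℂ) := by
    have h5 : ∀ k, ∑ l, (starRingEnd ℂ) (w k) * (Gmap x k l * u l)
        = (starRingEnd ℂ) (w k) * w k := by
      intro k
      rw [← Finset.mul_sum]
      rfl
    rw [Finset.sum_congr rfl fun k _ => h5 k]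
    have e : ∀ k, (starRingEnd ℂ) (w k) * w k = ((Complex.normSq (w k) : ℝ) : ℂ) := fun k => by
      rw [mul_comm, Complex.mul_conj]
    rw [Finset.sum_congr rfl fun k _ => e k, ← Complex.ofReal_sum]
  rw [hsum] at hbl
  have habs : ‖((t : ℝ) : ℂ)‖ = t := by
    rw [Complex.norm_real, Real.norm_eq_abs, abs_of_nonneg ht0]
  rw [habs, hnorm, Real.sqrt_one, mul_one] at hbl
  -- hbl : t ≤ P * sqrt t
  have hsv : singvals X i = Real.sqrt t := by
    rw [show singvals X i
      = Real.sqrt ((Matrix.isHermitian_conjTranspose_mul_self X).eigenvalues i) from rfl, heig]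
  rw [hsv]
  rcases eq_or_lt_of_le ht0 with h0 | h0
  · rw [← h0, Real.sqrt_zero]; exact hP
  · have hst : 0 < Real.sqrt t := Real.sqrt_pos.mpr h0
    have : Real.sqrt t * Real.sqrt t ≤ P * Real.sqrt t := by
      rw [Real.mul_self_sqrt ht0]
      rw [ht] at hbl ⊢
      convert hbl using 2
    exact le_of_mul_le_mul_right this hst

end MyDet


section MyFinal
open Real

/-- coefficient vectors of the real linear functionals `±Re(q_m)`, `±Im(q_m)` -/
def mycoef (N : ℕ) (p : Fin (2 * N - 1) × Bool × Bool) :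
    (Fin (2 * N - 1) ⊕ Fin (2 * N - 1)) → ℝ
  | Sum.inl j => (if p.2.2 then (1:ℝ) else -1) *
      ((if p.2.1 then (myec (2 * π * j.1 * p.1.1 / ((2 * N - 1 : ℕ) : ℝ))).re
        else (myec (2 * π * j.1 * p.1.1 / ((2 * N - 1 : ℕ) : ℝ))).im)
        * (Real.sqrt (Kval N j.1))⁻¹)
  | Sum.inr j => (if p.2.2 then (1:ℝ) else -1) *
      ((if p.2.1 then -(myec (2 * π * j.1 * p.1.1 / ((2 * N - 1 : ℕ) : ℝ))).im
        else (myec (2 * π * j.1 * p.1.1 / ((2 * N - 1 : ℕ) : ℝ))).re)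
        * (Real.sqrt (Kval N j.1))⁻¹)

lemma mycoef_false (N : ℕ) (m : Fin (2 * N - 1)) (b : Bool)
    (i : Fin (2 * N - 1) ⊕ Fin (2 * N - 1)) :
    mycoef N (m, b, false) i = - mycoef N (m, b, true) i := by
  cases i <;> cases b <;> simp [mycoef]

lemma my_re_term (α β c : ℝ) (e : ℂ) :
    ((⟨α, β⟩ : ℂ) / (c : ℂ) * e).re = α * (e.re * c⁻¹) + β * (-e.im * c⁻¹) := by
  rw [div_eq_mul_inv, ← Complex.ofReal_inv]
  simp [Complex.mul_re, Complex.mul_im]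
  ring

lemma my_im_term (α β c : ℝ) (e : ℂ) :
    ((⟨α, β⟩ : ℂ) / (c : ℂ) * e).im = α * (e.im * c⁻¹) + β * (e.re * c⁻¹) := by
  rw [div_eq_mul_inv, ← Complex.ofReal_inv]
  simp [Complex.mul_re, Complex.mul_im]
  ring

lemma myQ_re (N : ℕ) (ξ : Fin (2 * N - 1) ⊕ Fin (2 * N - 1) → ℝ) (m : Fin (2 * N - 1)) :
    (myQ N (toComplexVec ξ) m).re = ∑ i, mycoef N (m, true, true) i * ξ i := by
  rw [myQ, Complex.re_sum, Fintype.sum_sum_type, ← Finset.sum_add_distrib]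
  refine Finset.sum_congr rfl fun j _ => ?_
  have h : toComplexVec ξ j = ⟨ξ (Sum.inl j), ξ (Sum.inr j)⟩ := rfl
  rw [h, my_re_term]
  simp [mycoef]
  ring

lemma myQ_im (N : ℕ) (ξ : Fin (2 * N - 1) ⊕ Fin (2 * N - 1) → ℝ) (m : Fin (2 * N - 1)) :
    (myQ N (toComplexVec ξ) m).im = ∑ i, mycoef N (m, false, true) i * ξ i := by
  rw [myQ, Complex.im_sum, Fintype.sum_sum_type, ← Finset.sum_add_distrib]
  refine Finset.sum_congr rfl fun j _ => ?_
  have h : toComplexVec ξ j = ⟨ξ (Sum.inl j), ξ (Sum.inr j)⟩ := rfl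
  rw [h, my_im_term]
  simp [mycoef]
  ring

lemma mycoef_sq (N : ℕ) (p : Fin (2 * N - 1) × Bool × Bool) :
    ∑ i, (mycoef N p i) ^ 2 = ∑ j : Fin (2 * N - 1), ((Kval N j.1 : ℝ))⁻¹ := by
  rw [Fintype.sum_sum_type, ← Finset.sum_add_distrib]
  refine Finset.sum_congr rfl fun j _ => ?_
  have hsq : ((Real.sqrt (Kval N j.1))⁻¹) ^ 2 = ((Kval N j.1 : ℝ))⁻¹ := by
    rw [← Real.sqrt_inv, Real.sq_sqrt (by positivity)]
  have h1 : (myec (2 * π * j.1 * p.1.1 / ((2 * N - 1 : ℕ) : ℝ))).re ^ 2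
      + (myec (2 * π * j.1 * p.1.1 / ((2 * N - 1 : ℕ) : ℝ))).im ^ 2 = 1 := by
    have := myec_normSq (2 * π * j.1 * p.1.1 / ((2 * N - 1 : ℕ) : ℝ))
    rw [Complex.normSq_apply] at this
    nlinarith [this]
  obtain ⟨m, b, sg⟩ := p
  cases b <;> cases sg <;> simp only [mycoef] <;> norm_num <;>
    linear_combination ((Real.sqrt (Kval N j.1))⁻¹) ^ 2 * h1 + hsq

lemma my_harmonic : ∀ n : ℕ, 1 ≤ n →
    ∑ j ∈ Finset.range n, ((j : ℝ) + 1)⁻¹ ≤ 1 + Real.log n := by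
  intro n hn
  induction n, hn using Nat.le_induction with
  | base => norm_num
  | succ n hn ih =>
    rw [Finset.sum_range_succ]
    have hx : (0:ℝ) < n := by exact_mod_cast hn
    have h := Real.log_le_sub_one_of_pos (x := (n : ℝ) / ((n : ℝ) + 1)) (by positivity)
    rw [Real.log_div hx.ne' (by positivity)] at h
    have he : (n : ℝ) / ((n : ℝ) + 1) - 1 = -((n : ℝ) + 1)⁻¹ := by
      field_simp
      ring
    rw [he] at h
    have hcast : Real.log ((n : ℕ) + 1 : ℕ) = Real.log ((n : ℝ) + 1) := by push_cast; rfl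
    rw [hcast]
    linarith

lemma my_s_bound (N : ℕ) (hN : 2 ≤ N) :
    ∑ j : Fin (2 * N - 1), ((Kval N j.1 : ℝ))⁻¹ ≤ 2 + 2 * Real.log (2 * N) := by
  have hM : 1 ≤ 2 * N - 1 := by omega
  rw [Fin.sum_univ_eq_sum_range (fun j => ((Kval N j : ℝ))⁻¹) (2 * N - 1)]
  have hle : ∀ j ∈ Finset.range (2 * N - 1),
      ((Kval N j : ℝ))⁻¹ ≤ ((j : ℝ) + 1)⁻¹ + (((2 * N - 1 - j : ℕ)) : ℝ)⁻¹ := by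
    intro j hj
    simp only [Finset.mem_range] at hj
    have h1 : (0:ℝ) < (j : ℝ) + 1 := by positivity
    have h2 : (0:ℝ) < ((2 * N - 1 - j : ℕ) : ℝ) := by
      have : 1 ≤ 2 * N - 1 - j := by omega
      exact_mod_cast Nat.lt_of_lt_of_le Nat.zero_lt_one this
    rw [Kval]
    rcases le_total (j + 1) (2 * N - 1 - j) with h | h
    · rw [min_eq_left h]
      have hc : ((j + 1 : ℕ) : ℝ) = (j : ℝ) + 1 := by push_cast; rfl
      rw [hc]
      have := inv_nonneg.mpr h2.le
      linarith
    · rw [min_eq_right h]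
      have := inv_nonneg.mpr h1.le
      linarith
  calc ∑ j ∈ Finset.range (2 * N - 1), ((Kval N j : ℝ))⁻¹
      ≤ ∑ j ∈ Finset.range (2 * N - 1), (((j : ℝ) + 1)⁻¹ + (((2 * N - 1 - j : ℕ)) : ℝ)⁻¹) :=
        Finset.sum_le_sum hle
    _ = ∑ j ∈ Finset.range (2 * N - 1), ((j : ℝ) + 1)⁻¹
        + ∑ j ∈ Finset.range (2 * N - 1), (((2 * N - 1 - j : ℕ)) : ℝ)⁻¹ :=
        Finset.sum_add_distrib
    _ = ∑ j ∈ Finset.range (2 * N - 1), ((j : ℝ) + 1)⁻¹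
        + ∑ j ∈ Finset.range (2 * N - 1), ((j : ℝ) + 1)⁻¹ := by
        congr 1
        rw [← Finset.sum_range_reflect (fun j => ((j : ℝ) + 1)⁻¹) (2 * N - 1)]
        refine Finset.sum_congr rfl fun j hj => ?_
        simp only [Finset.mem_range] at hj
        have : (2 * N - 1 - j : ℕ) = (2 * N - 1 - 1 - j : ℕ) + 1 := by omega
        rw [this]
        push_cast
        ring_nf
    _ ≤ 2 * (1 + Real.log ((2 * N - 1 : ℕ) : ℝ)) := by
        have := my_harmonic (2 * N - 1) hM
        linarith
    _ ≤ 2 + 2 * Real.log (2 * N) := by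
        have h1 : ((2 * N - 1 : ℕ) : ℝ) ≤ ((2 * N : ℕ) : ℝ) := by
          exact_mod_cast Nat.sub_le (2 * N) 1
        have h2 : (0:ℝ) < ((2 * N - 1 : ℕ) : ℝ) := by
          have : 1 ≤ 2 * N - 1 := hM
          exact_mod_cast Nat.lt_of_lt_of_le Nat.zero_lt_one this
        have h3 := Real.log_le_log h2 h1
        have h4 : ((2 * N : ℕ) : ℝ) = 2 * (N : ℝ) := by push_cast; ring
        rw [h4] at h3
        linarith

end MyFinal

/-- the expected spectral norm of the complex random Hankel matrix `G g`,
`g` complex standard Gaussian in `ℂ^{2N-1}`, is at most `C ln N`. -/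
theorem stmt_13 :
    ∃ C : ℝ, 0 < C ∧ ∀ N : ℕ, 2 ≤ N →
      (∫ ξ, specNorm (Gmap (toComplexVec ξ))
          ∂(Measure.pi fun _ : Fin (2 * N - 1) ⊕ Fin (2 * N - 1) => gaussianReal 0 1)) ≤
        C * Real.log N := by
  refine ⟨15, by norm_num, fun N hN => ?_⟩
  set μ := Measure.pi fun _ : Fin (2 * N - 1) ⊕ Fin (2 * N - 1) => gaussianReal 0 1 with hμ
  have hNR : (2:ℝ) ≤ (N:ℝ) := by exact_mod_cast hN
  have hlogN : Real.log 2 ≤ Real.log N := Real.log_le_log two_pos hNR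
  have hlog2 : (0.6931471803 : ℝ) < Real.log 2 := Real.log_two_gt_d9
  have hlogNpos : (0:ℝ) < Real.log N := lt_of_lt_of_le (by linarith) hlogN
  by_cases hint : Integrable (fun ξ => specNorm (Gmap (toComplexVec ξ))) μ
  · haveI hne : Nonempty (Fin (2 * N - 1) × Bool × Bool) := ⟨(⟨0, by omega⟩, true, true)⟩
    set F : (Fin (2 * N - 1) ⊕ Fin (2 * N - 1) → ℝ) → ℝ := fun ξ =>
      Finset.univ.sup' Finset.univ_nonempty (fun p => ∑ i, mycoef N p i * ξ i) with hF
    have hdom : ∀ ξ, specNorm (Gmap (toComplexVec ξ)) ≤ 2 * F ξ := by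
      intro ξ
      have hYle : ∀ p, ∑ i, mycoef N p i * ξ i ≤ F ξ := fun p =>
        Finset.le_sup' (fun p => ∑ i, mycoef N p i * ξ i) (Finset.mem_univ p)
      have hneg : ∀ (m : Fin (2 * N - 1)) (b : Bool),
          ∑ i, mycoef N (m, b, false) i * ξ i = -∑ i, mycoef N (m, b, true) i * ξ i := by
        intro m b
        rw [← Finset.sum_neg_distrib]
        refine Finset.sum_congr rfl fun i _ => ?_
        rw [mycoef_false]; ring
      have hre : ∀ m, |(myQ N (toComplexVec ξ) m).re| ≤ F ξ := by
        intro m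
        rw [myQ_re]
        refine abs_le.mpr ⟨?_, hYle (m, true, true)⟩
        have h := hYle (m, true, false)
        rw [hneg m true] at h
        linarith
      have him : ∀ m, |(myQ N (toComplexVec ξ) m).im| ≤ F ξ := by
        intro m
        rw [myQ_im]
        refine abs_le.mpr ⟨?_, hYle (m, false, true)⟩
        have h := hYle (m, false, false)
        rw [hneg m false] at h
        linarith
      have hF0 : 0 ≤ F ξ := le_trans (abs_nonneg _) (hre ⟨0, by omega⟩)
      refine my_spec_bound hN (toComplexVec ξ) (2 * F ξ) (by linarith) ?_
      intro m
      calc ‖myQ N (toComplexVec ξ) m‖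
          ≤ |(myQ N (toComplexVec ξ) m).re| + |(myQ N (toComplexVec ξ) m).im| :=
            Complex.norm_le_abs_re_add_abs_im _
        _ ≤ 2 * F ξ := by have h1 := hre m; have h2 := him m; linarith
    have hFi : Integrable F μ := my_sup_integrable (mycoef N)
    have h2Fi : Integrable (fun ξ => 2 * F ξ) μ := hFi.const_mul 2
    have hmono := integral_mono hint h2Fi hdom
    have hIF : ∫ ξ, 2 * F ξ ∂μ = 2 * ∫ ξ, F ξ ∂μ := integral_const_mul 2 _
    have hsb := my_sup_bound (mycoef N) (2 + 2 * Real.log (2 * N)) (fun p => by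
      rw [mycoef_sq]
      exact my_s_bound N hN)
    have hcard : (Fintype.card (Fin (2 * N - 1) × Bool × Bool) : ℝ)
        = 4 * ((2 * N - 1 : ℕ) : ℝ) := by
      rw [Fintype.card_prod, Fintype.card_prod, Fintype.card_bool, Fintype.card_fin]
      push_cast
      ring
    have hcard_pos : (0:ℝ) < (Fintype.card (Fin (2 * N - 1) × Bool × Bool) : ℝ) := by
      exact_mod_cast Fintype.card_pos
    have hcard_le : (Fintype.card (Fin (2 * N - 1) × Bool × Bool) : ℝ) ≤ 8 * (N : ℝ) := by
      rw [hcard]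
      have h1 : ((2 * N - 1 : ℕ) : ℝ) ≤ 2 * (N : ℝ) := by
        have : (2 * N - 1 : ℕ) ≤ 2 * N := Nat.sub_le _ _
        calc ((2 * N - 1 : ℕ) : ℝ) ≤ ((2 * N : ℕ) : ℝ) := by exact_mod_cast this
          _ = 2 * (N : ℝ) := by push_cast; ring
      linarith
    have hlogcard : Real.log (Fintype.card (Fin (2 * N - 1) × Bool × Bool))
        ≤ Real.log 8 + Real.log N := by
      have h1 := Real.log_le_log hcard_pos hcard_le
      rwa [Real.log_mul (by norm_num) (by positivity)] at h1
    have hlog8 : Real.log 8 = 3 * Real.log 2 := by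
      rw [show (8:ℝ) = 2 ^ 3 by norm_num, Real.log_pow]
      push_cast
      ring
    have hlog2N : Real.log (2 * (N:ℝ)) = Real.log 2 + Real.log N :=
      Real.log_mul (by norm_num) (by positivity)
    have hbound : ∫ ξ, F ξ ∂μ ≤ Real.log 8 + Real.log N + 1 + (Real.log 2 + Real.log N) := by
      have h2 : Real.log (Fintype.card (Fin (2 * N - 1) × Bool × Bool))
          + (2 + 2 * Real.log (2 * (N:ℝ))) / 2
          ≤ Real.log 8 + Real.log N + 1 + (Real.log 2 + Real.log N) := by
        rw [hlog2N]
        linarith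
      have h3 : Real.log (2 * N) = Real.log (2 * (N:ℝ)) := by norm_num
      rw [h3] at hsb
      exact hsb.trans h2
    calc ∫ ξ, specNorm (Gmap (toComplexVec ξ)) ∂μ ≤ ∫ ξ, 2 * F ξ ∂μ := hmono
      _ = 2 * ∫ ξ, F ξ ∂μ := hIF
      _ ≤ 2 * (Real.log 8 + Real.log N + 1 + (Real.log 2 + Real.log N)) := by linarith
      _ ≤ 15 * Real.log N := by
          rw [hlog8]
          nlinarith [hlogN, hlog2, hlogNpos]
  · rw [integral_undef hint]
    exact mul_nonneg (by norm_num) hlogNpos.le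

end
end

section
/- Let N ≥ 1, R ≥ 1, and let x̂ ∈ ℂ^{2N-1} satisfy x̂_j = Σ_{k=1}^R c_k z_k^j for j = 0,…,2N-2, with c_k, z_k ∈ ℂ. Then the N×N Hankel matrix H(x̂) has rank at most R. Moreover, if R ≤ N, the z_k are pairwise distinct, and all c_k ≠ 0, then rank H(x̂) = R; indeed H(x̂) admits the Vandermonde factorization H(x̂) = V · diag(c₁,…,c_R) · Vᵀ, where V ∈ ℂ^{N×R} has entries V_{jk} = z_k^j for 0 ≤ j ≤ N-1, 1 ≤ k ≤ R. -/
open MeasureTheory ProbabilityTheory Matrix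

noncomputable section

/-- rank and Vandermonde factorization of the Hankel matrix of a
superposition of `R` complex exponentials. -/
theorem stmt_14 (N R : ℕ) (hN : 1 ≤ N) (hR : 1 ≤ R)
    (c z : Fin R → ℂ) (xhat : Fin (2 * N - 1) → ℂ)
    (hx : ∀ j : Fin (2 * N - 1), xhat j = ∑ k, c k * z k ^ (j : ℕ)) :
    (hankelMat xhat).rank ≤ R ∧
    (R ≤ N → Function.Injective z → (∀ k, c k ≠ 0) →
      (hankelMat xhat).rank = R ∧
      hankelMat xhat =
        (Matrix.of fun (j : Fin N) (k : Fin R) => z k ^ (j : ℕ)) * Matrix.diagonal c *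
          (Matrix.of fun (j : Fin N) (k : Fin R) => z k ^ (j : ℕ))ᵀ) := by
  set V : Matrix (Fin N) (Fin R) ℂ := Matrix.of fun (j : Fin N) (k : Fin R) => z k ^ (j : ℕ)
  have hfact : hankelMat xhat = V * Matrix.diagonal c * Vᵀ := by
    ext j k
    simp only [hankelMat, Matrix.mul_apply, Matrix.transpose_apply, Matrix.diagonal_apply,
      Finset.sum_ite_eq, Finset.mem_univ, if_true, V, Matrix.of_apply]
    rw [hx]
    simp only [Finset.sum_mul]
    refine Finset.sum_congr rfl fun r _ => ?_
    simp [mul_ite, ite_mul, Finset.sum_ite_eq', pow_add]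
    ring
  have hle : (hankelMat xhat).rank ≤ R := by
    rw [hfact]
    calc (V * Matrix.diagonal c * Vᵀ).rank ≤ V.rank :=
          le_trans (rank_mul_le_left _ _) (rank_mul_le_left _ _)
      _ ≤ R := by simpa using V.rank_le_card_width
  refine ⟨hle, fun hRN hz hc => ⟨le_antisymm hle ?_, hfact⟩⟩
  -- lower bound
  set P : Matrix (Fin R) (Fin N) ℂ := Matrix.of fun i j => if (Fin.castLE hRN i) = j then 1 else 0
  set W : Matrix (Fin R) (Fin R) ℂ := (Matrix.vandermonde z)ᵀ
  have hB : P * hankelMat xhat * Pᵀ = W * Matrix.diagonal c * Wᵀ := by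
    ext i k
    have h1 : (P * hankelMat xhat * Pᵀ) i k = hankelMat xhat (Fin.castLE hRN i) (Fin.castLE hRN k) := by
      simp [Matrix.mul_apply, P, Matrix.transpose_apply, Finset.sum_ite_eq,
        Finset.sum_ite_eq', ite_mul, mul_ite]
    rw [h1, hfact]
    simp only [Matrix.mul_apply, Matrix.transpose_apply, Matrix.diagonal_apply,
      Finset.sum_ite_eq, Finset.mem_univ, if_true, V, W, Matrix.of_apply, Matrix.vandermonde]
    refine Finset.sum_congr rfl fun r _ => ?_
    simp [mul_ite, ite_mul, Finset.sum_ite_eq']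
  have hdet : IsUnit (W * Matrix.diagonal c * Wᵀ).det := by
    have hv : (Matrix.vandermonde z).det ≠ 0 := Matrix.det_vandermonde_ne_zero_iff.mpr hz
    simp only [Matrix.det_mul, Matrix.det_transpose, Matrix.det_diagonal, W]
    exact (isUnit_iff_ne_zero.mpr (by
      refine mul_ne_zero (mul_ne_zero hv ?_) hv
      exact Finset.prod_ne_zero_iff.mpr fun k _ => hc k))
  have : (W * Matrix.diagonal c * Wᵀ).rank = R := by
    rw [Matrix.rank_of_isUnit _ ((Matrix.isUnit_iff_isUnit_det _).mpr hdet)]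
    simp
  calc (R : ℕ) = (P * hankelMat xhat * Pᵀ).rank := by rw [hB, this]
    _ ≤ (P * hankelMat xhat).rank := rank_mul_le_left _ _
    _ ≤ (hankelMat xhat).rank := rank_mul_le_right _ _

end
end
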